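/- Let f : ℝ^d → ℝ be convex and L-smooth with a minimizer x_*, let δ > 0, x₀ ∈ ℝ^d, and f_δ(x) = f(x) + (δ/2)‖x − x₀‖². Suppose x_{t+1} satisfies f_δ(x_{t+1}) − f_δ(x) ≤ (1 − √(δ/(L+δ)))^t (f(x₀) − f(x)) for all x. If (1 − √(δ/(L+δ)))^t · (L/δ) ≤ 1, then ‖x_{t+1} − x₀‖ ≤ √2 ‖x₀ − x_*‖. -/

import Mathlib

theorem regularized_stage_distance_bound {d : ℕ} (L δ : ℝ) (hL : 0 < L) (hδ : 0 < δ)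
    (f : EuclideanSpace ℝ (Fin d) → ℝ)
    (f' : EuclideanSpace ℝ (Fin d) → EuclideanSpace ℝ (Fin d))
    (hconv : ConvexOn ℝ Set.univ f)
    (hgrad : ∀ x, HasGradientAt f (f' x) x)
    (hlip : ∀ x y, ‖f' x - f' y‖ ≤ L * ‖x - y‖)
    (xstar : EuclideanSpace ℝ (Fin d)) (hstar : ∀ y, f xstar ≤ f y)
    (x0 xt1 : EuclideanSpace ℝ (Fin d)) (t : ℕ)
    (hyp : ∀ x, (f xt1 + δ / 2 * ‖xt1 - x0‖ ^ 2) - (f x + δ / 2 * ‖x - x0‖ ^ 2)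
        ≤ (1 - Real.sqrt (δ / (L + δ))) ^ t * (f x0 - f x))
    (hcond : (1 - Real.sqrt (δ / (L + δ))) ^ t * (L / δ) ≤ 1) :
    ‖xt1 - x0‖ ≤ Real.sqrt 2 * ‖x0 - xstar‖ := by
  set u : EuclideanSpace ℝ (Fin d) := x0 - xstar with hu
  -- gradient at the minimizer is zero
  have hmin : IsLocalMin f xstar := Filter.Eventually.of_forall hstar
  have hzero : f' xstar = 0 := by
    have h0 := hmin.hasFDerivAt_eq_zero (hgrad xstar).hasFDerivAt
    exact (LinearIsometryEquiv.map_eq_zero_iff _).1 h0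
  -- descent lemma: f x0 - f xstar ≤ L/2 ‖x0 - xstar‖²
  have hdesc : f x0 - f xstar ≤ L / 2 * ‖u‖ ^ 2 := by
    set g : ℝ → ℝ := fun s => f (xstar + s • u) - L / 2 * ‖u‖ ^ 2 * s ^ 2 with hg
    have hderiv : ∀ s : ℝ, HasDerivAt g
        (inner ℝ (f' (xstar + s • u)) u - L / 2 * ‖u‖ ^ 2 * (2 * s)) s := by
      intro s
      have hline : HasDerivAt (fun s : ℝ => xstar + s • u) u s := by
        simpa using ((hasDerivAt_id s).smul_const u).const_add xstar
      have h1 := ((hgrad (xstar + s • u)).hasFDerivAt.comp_hasDerivAt s hline)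
      have h2 : HasDerivAt (fun s : ℝ => L / 2 * ‖u‖ ^ 2 * s ^ 2)
          (L / 2 * ‖u‖ ^ 2 * (2 * s)) s := by
        simpa [mul_comm] using (hasDerivAt_pow 2 s).const_mul (L / 2 * ‖u‖ ^ 2)
      have := h1.sub h2
      exact this
    have hanti : AntitoneOn g (Set.Icc (0 : ℝ) 1) := by
      apply antitoneOn_of_deriv_nonpos (convex_Icc 0 1)
      · exact fun s _ => (hderiv s).continuousAt.continuousWithinAt
      · exact fun s _ => ((hderiv s).differentiableAt).differentiableWithinAt
      · intro s hs
        rw [interior_Icc] at hs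
        rw [(hderiv s).deriv]
        have hineq : (inner ℝ (f' (xstar + s • u)) u : ℝ) ≤ L * s * ‖u‖ ^ 2 := by
          have : (inner ℝ (f' (xstar + s • u)) u : ℝ)
              = inner ℝ (f' (xstar + s • u) - f' xstar) u := by
            rw [hzero]; simp
          rw [this]
          calc (inner ℝ (f' (xstar + s • u) - f' xstar) u : ℝ)
              ≤ ‖f' (xstar + s • u) - f' xstar‖ * ‖u‖ := real_inner_le_norm _ _
            _ ≤ L * ‖(xstar + s • u) - xstar‖ * ‖u‖ := by
                have := hlip (xstar + s • u) xstar
                exact mul_le_mul_of_nonneg_right (by simpa using this) (norm_nonneg u)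
            _ = L * s * ‖u‖ ^ 2 := by
                rw [show (xstar + s • u) - xstar = s • u by abel]
                rw [norm_smul, Real.norm_eq_abs, abs_of_pos hs.1]
                ring
        nlinarith [sq_nonneg ‖u‖]
    have h01 := hanti (Set.left_mem_Icc.2 zero_le_one) (Set.right_mem_Icc.2 zero_le_one)
      zero_le_one
    have hx0 : xstar + (1 : ℝ) • u = x0 := by simp [hu]
    simp only [g, hx0, zero_smul, add_zero, one_pow] at h01
    nlinarith [h01]
  -- main chain
  set ρ : ℝ := (1 - Real.sqrt (δ / (L + δ))) ^ t with hρ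
  have hρ0 : 0 ≤ ρ := by
    apply pow_nonneg
    have h1 : δ / (L + δ) ≤ 1 := by
      rw [div_le_one (by linarith)]; linarith
    have := Real.sqrt_le_sqrt h1
    simpa using this.trans_eq Real.sqrt_one
  have key := hyp xstar
  have hfs : f xstar ≤ f xt1 := hstar xt1
  have hgap : ρ * (f x0 - f xstar) ≤ ρ * (L / 2 * ‖u‖ ^ 2) :=
    mul_le_mul_of_nonneg_left hdesc hρ0
  have hLδ : ρ * (L / 2 * ‖u‖ ^ 2) ≤ δ / 2 * ‖u‖ ^ 2 := by
    have h2 : ρ * (L / δ) * (δ / 2 * ‖u‖ ^ 2) ≤ 1 * (δ / 2 * ‖u‖ ^ 2) :=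
      mul_le_mul_of_nonneg_right hcond (by positivity)
    have : ρ * (L / 2 * ‖u‖ ^ 2) = ρ * (L / δ) * (δ / 2 * ‖u‖ ^ 2) := by
      field_simp
    rw [this]; linarith
  have hnorm : ‖xstar - x0‖ = ‖u‖ := by rw [hu, norm_sub_rev]
  have hsq : ‖xt1 - x0‖ ^ 2 ≤ 2 * ‖u‖ ^ 2 := by
    have : δ / 2 * ‖xt1 - x0‖ ^ 2 ≤ δ / 2 * ‖u‖ ^ 2 + δ / 2 * ‖u‖ ^ 2 := by
      rw [hnorm] at key; nlinarith
    nlinarith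
  calc ‖xt1 - x0‖ = Real.sqrt (‖xt1 - x0‖ ^ 2) := by
        rw [Real.sqrt_sq (norm_nonneg _)]
    _ ≤ Real.sqrt (2 * ‖u‖ ^ 2) := Real.sqrt_le_sqrt hsq
    _ = Real.sqrt 2 * ‖u‖ := by
        rw [Real.sqrt_mul (by norm_num), Real.sqrt_sq (norm_nonneg _)]
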